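/- Under the substitution w = xy, the system x' = x(x − y + (1−n)z), y' = y(y − x + (1−m)z), z' = z² + αxy projects to w' = (2 − κ)wz, z' = z² + αw, where κ = m + n; consequently z satisfies the second-order equation z'' = (4−κ)zz' − (2−κ)z³, independent of α. -/

import Mathlib

theorem reduction_to_second_order (n m : ℤ) (α : ℂ) (x y z : ℂ → ℂ)
    (hx : ∀ t, HasDerivAt x (x t * (x t - y t + (1 - (n : ℂ)) * z t)) t)
    (hy : ∀ t, HasDerivAt y (y t * (y t - x t + (1 - (m : ℂ)) * z t)) t)
    (hz : ∀ t, HasDerivAt z ((z t) ^ 2 + α * x t * y t) t) :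
    (∀ t, HasDerivAt (fun s => x s * y s)
        ((2 - ((m : ℂ) + (n : ℂ))) * (x t * y t) * z t) t) ∧
    (∀ t, HasDerivAt (fun s => (z s) ^ 2 + α * x s * y s)
        ((4 - ((m : ℂ) + (n : ℂ))) * z t * ((z t) ^ 2 + α * x t * y t)
          - (2 - ((m : ℂ) + (n : ℂ))) * (z t) ^ 3) t) := by
  have hw : ∀ t, HasDerivAt (fun s => x s * y s)
      ((2 - ((m : ℂ) + (n : ℂ))) * (x t * y t) * z t) t := by
    intro t
    have := (hx t).mul (hy t)
    exact this.congr_deriv (by ring)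
  refine ⟨hw, fun t => ?_⟩
  have h2 : HasDerivAt (fun s => (z s) ^ 2)
      (2 * z t * ((z t) ^ 2 + α * x t * y t)) t := by
    have h2' := (hz t).pow 2
    exact h2'.congr_deriv (by simp)
  have h3 := h2.add (((hw t).const_mul α))
  have h4 := h3.congr_deriv (show _ = ((4 - ((m : ℂ) + (n : ℂ))) * z t * ((z t) ^ 2 + α * x t * y t)
          - (2 - ((m : ℂ) + (n : ℂ))) * (z t) ^ 3) by ring)
  exact h4.congr_of_eventuallyEq (Filter.Eventually.of_forall fun s => by
    show _ = z s ^ 2 + α * (x s * y s); ring)
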